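/- Let F be a field, let n = ν·n_ℓ with ν ≥ 1 and n_ℓ ≥ 1, let γ ∈ F be a primitive n-th root of unity, let 1 ≤ r ≤ n_ℓ, and let k be an integer with r ≤ k ≤ rν. Write k = a·r + b with 0 ≤ a ≤ ν−1 and 1 ≤ b ≤ r, and let T_k = { z·n_ℓ + y : 0 ≤ z ≤ a−1, 0 ≤ y ≤ r−1 } ∪ { a·n_ℓ + y : 0 ≤ y ≤ b−1 }. Let V be the F-span of the monomials { X^t : t ∈ T_k } in F[X]. Then for every i with 0 ≤ i ≤ ν−1, the image of V under the map M ↦ M mod (X^{n_ℓ} − γ^{i·n_ℓ}) equals the space of all polynomials in F[X] of degree at most r−1. -/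

import Mathlib

open Polynomial

/-- Each local code of the Tamo-Barg code, i.e. the set of reductions modulo
the coset annihilator `f⁽ⁱ⁾(X) = X^{n_ℓ} − γ^{i·n_ℓ}` of the message space
spanned by the monomials `{X^t : t ∈ T_k}`, is exactly the space of all
polynomials of degree at most `r − 1` (an `[n_ℓ, r]` MDS code). -/
theorem tamo_barg_local_code_is_mds
    (F : Type*) [Field F] (ν nℓ r k a b : ℕ)
    (hν : 1 ≤ ν) (hnℓ : 1 ≤ nℓ) (hr : 1 ≤ r) (hrn : r ≤ nℓ)
    (γ : F) (hγ : IsPrimitiveRoot γ (ν * nℓ))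
    (hrk : r ≤ k) (hkr : k ≤ r * ν)
    (hk : k = a * r + b) (ha : a ≤ ν - 1) (hb1 : 1 ≤ b) (hbr : b ≤ r) :
    ∀ i : ℕ, i ≤ ν - 1 →
      (fun M : F[X] => M %ₘ (X ^ nℓ - Polynomial.C (γ ^ (i * nℓ)))) ''
        (Submodule.span F
          ((fun t : ℕ => (X : F[X]) ^ t) ''
            ({t | ∃ z < a, ∃ y < r, t = z * nℓ + y} ∪
             {t | ∃ y < b, t = a * nℓ + y})) : Set F[X])
      = {p : F[X] | p.degree < (r : ℕ)} := by
  intro i _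
  set c : F := γ ^ (i * nℓ) with hc
  set f : F[X] := X ^ nℓ - C c with hfdef
  have hnℓ0 : nℓ ≠ 0 := by omega
  have hmonic : f.Monic := monic_X_pow_sub_C c hnℓ0
  have hdegf : f.degree = (nℓ : ℕ) := degree_X_pow_sub_C (by omega) c
  -- the key computation: reduction of a monomial
  have key : ∀ (z y : ℕ), y < nℓ →
      (X : F[X]) ^ (z * nℓ + y) %ₘ f = C (c ^ z) * X ^ y := by
    intro z y hy
    have hdvd : f ∣ (X : F[X]) ^ (z * nℓ + y) - C (c ^ z) * X ^ y := by
      have h1 : (X : F[X]) ^ (z * nℓ + y) - C (c ^ z) * X ^ y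
          = ((X ^ nℓ) ^ z - (C c) ^ z) * X ^ y := by
        rw [pow_add, pow_mul, C_pow]; ring
      rw [h1]
      exact Dvd.dvd.mul_right (sub_dvd_pow_sub_pow _ _ z) _
    have h0 : ((X : F[X]) ^ (z * nℓ + y) - C (c ^ z) * X ^ y) %ₘ f = 0 :=
      (modByMonic_eq_zero_iff_dvd hmonic).mpr hdvd
    rw [sub_modByMonic, sub_eq_zero] at h0
    rw [h0]
    rw [modByMonic_eq_self_iff hmonic, hdegf]
    exact lt_of_le_of_lt (degree_C_mul_X_pow_le y _) (by exact_mod_cast hy)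
  -- the monomial set
  set S : Set F[X] := (fun t : ℕ => (X : F[X]) ^ t) ''
      ({t | ∃ z < a, ∃ y < r, t = z * nℓ + y} ∪ {t | ∃ y < b, t = a * nℓ + y})
    with hS
  have himg : (fun M : F[X] => M %ₘ f) '' (Submodule.span F S : Set F[X])
      = ((Submodule.span F S).map (modByMonicHom f) : Set F[X]) := by
    rw [Submodule.map_coe]; rfl
  rw [himg, Submodule.map_span]
  -- show the spanned submodule is `degreeLT F r`
  have hmain : Submodule.span F ((modByMonicHom f) '' S) = degreeLT F r := by
    apply le_antisymm
    · rw [Submodule.span_le]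
      rintro q ⟨p, ⟨t, ht, rfl⟩, rfl⟩
      have : ∃ z y : ℕ, y < r ∧ t = z * nℓ + y := by
        rcases ht with ⟨z, hz, y, hy, rfl⟩ | ⟨y, hy, rfl⟩
        · exact ⟨z, y, hy, rfl⟩
        · exact ⟨a, y, lt_of_lt_of_le hy hbr, rfl⟩
      obtain ⟨z, y, hy, rfl⟩ := this
      have hyn : y < nℓ := lt_of_lt_of_le hy hrn
      show modByMonicHom f (X ^ (z * nℓ + y)) ∈ degreeLT F r
      rw [modByMonicHom, LinearMap.coe_mk, AddHom.coe_mk]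
      rw [key z y hyn, mem_degreeLT]
      exact lt_of_le_of_lt (degree_C_mul_X_pow_le y _) (by exact_mod_cast hy)
    · -- every `X ^ y` with `y < r` lies in the image
      have hXy : ∀ y : ℕ, y < r → (X : F[X]) ^ y ∈
          Submodule.span F ((modByMonicHom f) '' S) := by
        intro y hy
        have hyn : y < nℓ := lt_of_lt_of_le hy hrn
        have hXmem : (X : F[X]) ^ y ∈ S := by
          rcases Nat.eq_zero_or_pos a with rfl | hapos
          · have hbr' : b = r := by omega
            exact ⟨y, Or.inr ⟨y, by omega, by simp⟩, rfl⟩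
          · exact ⟨y, Or.inl ⟨0, hapos, y, hy, by simp⟩, rfl⟩
        have : modByMonicHom f ((X : F[X]) ^ y) = (X : F[X]) ^ y := by
          rw [modByMonicHom, LinearMap.coe_mk, AddHom.coe_mk]
          rw [modByMonic_eq_self_iff hmonic, hdegf, degree_X_pow]
          exact_mod_cast hyn
        exact Submodule.subset_span ⟨X ^ y, hXmem, this⟩
      intro p hp
      rw [mem_degreeLT] at hp
      have hnd : p.natDegree < r := by
        rcases eq_or_ne p 0 with rfl | hp0
        · simpa using Nat.lt_of_lt_of_le Nat.zero_lt_one hr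
        · exact natDegree_lt_iff_degree_lt hp0 |>.mpr hp
      rw [p.as_sum_range' r hnd]
      apply Submodule.sum_mem
      intro y hy
      rw [Finset.mem_range] at hy
      have := (Submodule.span F ((modByMonicHom f) '' S)).smul_mem
        (p.coeff y) (hXy y hy)
      simpa [Polynomial.smul_eq_C_mul, C_mul_X_pow_eq_monomial] using this
  rw [hmain]
  ext p
  simp [mem_degreeLT]
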